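/- Let n ≥ 1 and R ≥ 2. For each i ∈ {1,…,n} and r ∈ {1,…,R}, let X_{ir} be ℝ^d-valued, square-integrable random vectors such that the families (X_{i1},…,X_{iR}) are mutually independent across i, and for each fixed i the vectors X_{i1},…,X_{iR} are i.i.d. with mean μ_i ∈ ℝ^d and covariance matrix Σ_i. Define X̄_i := (1/R)Σ_{r=1}^R X_{ir}, X̄ := (1/n)Σ_{i=1}^n X̄_i, Σ̂_i := (1/(R(R−1)))Σ_{r=1}^R (X_{ir} − X̄_i)(X_{ir} − X̄_i)ᵀ, and μ̄ := (1/n)Σ_{i=1}^n μ_i. Then E[ (1/n)Σ_{i=1}^n { (X̄_i − X̄)(X̄_i − X̄)ᵀ + Σ̂_i/n } ] = (1/n)Σ_{i=1}^n { (μ_i − μ̄)(μ_i − μ̄)ᵀ + Σ_i/R }. -/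

import Mathlib

open MeasureTheory ProbabilityTheory Filter
open scoped RealInnerProductSpace

noncomputable section

/-- Euclidean space ℝ^d. -/
abbrev Euc (d : ℕ) := EuclideanSpace ℝ (Fin d)

/-- Frobenius (Hilbert–Schmidt) norm of a square matrix. -/
def frobNorm {d : ℕ} (M : Matrix (Fin d) (Fin d) ℝ) : ℝ :=
  Real.sqrt (∑ i, ∑ j, (M i j) ^ 2)

/-- Action of a `d × d` matrix on a vector of `ℝ^d`. -/
def mulVecE {d : ℕ} (M : Matrix (Fin d) (Fin d) ℝ) (v : Euc d) : Euc d :=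
  (EuclideanSpace.equiv (Fin d) ℝ).symm (M.mulVec ((EuclideanSpace.equiv (Fin d) ℝ) v))

/-- The standard Gaussian measure on ℝ^d. -/
def stdGaussian (d : ℕ) : Measure (Euc d) :=
  (Measure.pi fun _ : Fin d => gaussianReal 0 1).map
    ((EuclideanSpace.equiv (Fin d) ℝ).symm)

/-- The uniform probability measure on a finite type. -/
def uniformMeasure (ι : Type*) [Fintype ι] [MeasurableSpace ι] : Measure ι :=
  (Fintype.card ι : ENNReal)⁻¹ • Measure.count

/-- A coupling of two measures. -/
def IsCoupling {E : Type*} [MeasurableSpace E] (μ : Measure (E × E)) (p q : Measure E) : Prop :=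
  μ.map Prod.fst = p ∧ μ.map Prod.snd = q

/-- 2-Wasserstein distance. -/
def W2 {E : Type*} [MeasurableSpace E] [NormedAddCommGroup E] (p q : Measure E) : ℝ :=
  sInf {r : ℝ | ∃ μ : Measure (E × E), IsCoupling μ p q ∧
    r = Real.sqrt (∫ z, ‖z.1 - z.2‖ ^ 2 ∂μ)}

/-- One SMLD update. -/
def smldUpdate (d n S : ℕ) (V : Fin (n + 1) → Euc d → Euc d)
    (sqrtA : Euc d → Matrix (Fin d) (Fin d) ℝ) (ε : ℝ)
    (ϑ : Euc d) (ns : (Fin S → Fin n) × Euc d) : Euc d :=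
  ϑ - ε • (((n : ℝ) / (S : ℝ)) • ∑ s : Fin S, V (Fin.succ (ns.1 s)) ϑ + V 0 ϑ)
    + Real.sqrt (2 * ε) • mulVecE (sqrtA ϑ) ns.2

/-- The action of the SMLD Markov kernel on a measure. -/
def smldStep (d n S : ℕ) (V : Fin (n + 1) → Euc d → Euc d)
    (sqrtA : Euc d → Matrix (Fin d) (Fin d) ℝ) (ε : ℝ)
    (π : Measure (Euc d)) : Measure (Euc d) :=
  Measure.map (fun p : Euc d × ((Fin S → Fin n) × Euc d) => smldUpdate d n S V sqrtA ε p.1 p.2)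
    (π.prod ((uniformMeasure (Fin S → Fin n)).prod (stdGaussian d)))

/-- The stochastic mirror Langevin dynamics (SMLD) Markov chain. -/
structure SMLD (d n S : ℕ) (V : Fin (n + 1) → Euc d → Euc d)
    (sqrtA : Euc d → Matrix (Fin d) (Fin d) ℝ) (ε : ℝ)
    (Ω : Type) [MeasurableSpace Ω] (P : Measure Ω) where
  ϑ : ℕ → Ω → Euc d
  ι : ℕ → Ω → Fin S → Fin n
  Z : ℕ → Ω → Euc d
  meas_init : Measurable (ϑ 0)
  meas_ι : ∀ k, Measurable (ι k)
  meas_Z : ∀ k, Measurable (Z k)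
  step : ∀ k ω, ϑ (k + 1) ω = smldUpdate d n S V sqrtA ε (ϑ k ω) (ι k ω, Z k ω)
  law_noise : ∀ k, P.map (fun ω => (ι k ω, Z k ω)) =
    (uniformMeasure (Fin S → Fin n)).prod (stdGaussian d)
  indep_noise : iIndepFun (fun k ω => (ι k ω, Z k ω)) P
  indep_init : IndepFun (ϑ 0) (fun ω (k : ℕ) => (ι k ω, Z k ω)) P

end


section Aux

open MeasureTheory ProbabilityTheory

variable {Ω' : Type*} [MeasurableSpace Ω'] {P : Measure Ω'} [IsProbabilityMeasure P]

lemma memL2_mul_integrable {f g : Ω' → ℝ} (hf : MemLp f 2 P) (hg : MemLp g 2 P) :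
    Integrable (fun ω => f ω * g ω) P := by
  have h : (1:ENNReal)/1 = 1/2 + 1/2 := by
    rw [ENNReal.div_add_div_same, div_one, one_add_one_eq_two, ENNReal.div_self] <;> norm_num
  have := hg.smul hf (r := 1)
  rw [memLp_one_iff_integrable] at this
  exact this

lemma key_integral {ι : Type*} [Fintype ι] [DecidableEq ι]
    (Y Z : ι → Ω' → ℝ) (s : ι → ℝ)
    (hY2 : ∀ p, MemLp (Y p) 2 P) (hZ2 : ∀ p, MemLp (Z p) 2 P)
    (hY0 : ∀ p, ∫ ω, Y p ω ∂P = 0) (hZ0 : ∀ p, ∫ ω, Z p ω ∂P = 0)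
    (hYZ : ∀ p q, ∫ ω, Y p ω * Z q ω ∂P = if p = q then s p else 0)
    (c₀ d₀ : ℝ) (c e : ι → ℝ) :
    Integrable (fun ω => (c₀ + ∑ p, c p * Y p ω) * (d₀ + ∑ p, e p * Z p ω)) P ∧
    ∫ ω, (c₀ + ∑ p, c p * Y p ω) * (d₀ + ∑ p, e p * Z p ω) ∂P
      = c₀ * d₀ + ∑ p, c p * e p * s p := by
  have hF2 : MemLp (fun ω => ∑ p, c p * Y p ω) 2 P := by
    have h := memLp_finset_sum' (μ := P) (p := 2) Finset.univ
      (f := fun p ω => c p * Y p ω) (fun p _ => (hY2 p).const_mul (c p))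
    convert h using 1
    funext ω; simp
  have hG2 : MemLp (fun ω => ∑ p, e p * Z p ω) 2 P := by
    have h := memLp_finset_sum' (μ := P) (p := 2) Finset.univ
      (f := fun p ω => e p * Z p ω) (fun p _ => (hZ2 p).const_mul (e p))
    convert h using 1
    funext ω; simp
  have hF1 : Integrable (fun ω => ∑ p, c p * Y p ω) P := hF2.integrable one_le_two
  have hG1 : Integrable (fun ω => ∑ p, e p * Z p ω) P := hG2.integrable one_le_two
  have hFG : Integrable (fun ω => (∑ p, c p * Y p ω) * (∑ p, e p * Z p ω)) P :=
    memL2_mul_integrable hF2 hG2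
  have I1 : Integrable (fun ω => c₀ * (∑ p, e p * Z p ω)) P := hG1.const_mul c₀
  have I2 : Integrable (fun ω => (∑ p, c p * Y p ω) * d₀) P := hF1.mul_const d₀
  have I23 : Integrable (fun ω => (∑ p, c p * Y p ω) * d₀
      + (∑ p, c p * Y p ω) * (∑ p, e p * Z p ω)) P := I2.add hFG
  have I123 : Integrable (fun ω => c₀ * (∑ p, e p * Z p ω) + ((∑ p, c p * Y p ω) * d₀
      + (∑ p, c p * Y p ω) * (∑ p, e p * Z p ω))) P := I1.add I23
  have hint : Integrable (fun ω => (c₀ + ∑ p, c p * Y p ω) * (d₀ + ∑ p, e p * Z p ω)) P := by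
    have : (fun ω => (c₀ + ∑ p, c p * Y p ω) * (d₀ + ∑ p, e p * Z p ω))
        = fun ω => c₀ * d₀ + (c₀ * (∑ p, e p * Z p ω) + ((∑ p, c p * Y p ω) * d₀
            + (∑ p, c p * Y p ω) * (∑ p, e p * Z p ω))) := by
      funext ω; ring
    rw [this]
    exact (integrable_const _).add I123
  refine ⟨hint, ?_⟩
  have hintF : ∫ ω, ∑ p, c p * Y p ω ∂P = 0 := by
    rw [integral_finset_sum _ (fun p _ => ((hY2 p).integrable one_le_two).const_mul (c p))]
    simp [integral_const_mul, hY0]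
  have hintG : ∫ ω, ∑ p, e p * Z p ω ∂P = 0 := by
    rw [integral_finset_sum _ (fun p _ => ((hZ2 p).integrable one_le_two).const_mul (e p))]
    simp [integral_const_mul, hZ0]
  have hintFG : ∫ ω, (∑ p, c p * Y p ω) * (∑ p, e p * Z p ω) ∂P = ∑ p, c p * e p * s p := by
    have expand : (fun ω => (∑ p, c p * Y p ω) * (∑ p, e p * Z p ω))
        = fun ω => ∑ p, ∑ q, (c p * e q) * (Y p ω * Z q ω) := by
      funext ω; rw [Finset.sum_mul_sum]
      refine Finset.sum_congr rfl fun p _ => Finset.sum_congr rfl fun q _ => by ring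
    rw [expand]
    rw [integral_finset_sum _ (fun p _ => integrable_finset_sum _
      (fun q _ => (memL2_mul_integrable (hY2 p) (hZ2 q)).const_mul _))]
    refine Finset.sum_congr rfl fun p _ => ?_
    rw [integral_finset_sum _ (fun q _ =>
      (memL2_mul_integrable (hY2 p) (hZ2 q)).const_mul _)]
    simp only [integral_const_mul, hYZ, mul_ite, mul_zero]
    rw [Finset.sum_ite_eq Finset.univ p (fun q => c p * e q * s p)]
    simp
  have expand2 : ∫ ω, (c₀ + ∑ p, c p * Y p ω) * (d₀ + ∑ p, e p * Z p ω) ∂P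
      = ∫ ω, c₀ * d₀ + (c₀ * (∑ p, e p * Z p ω) + ((∑ p, c p * Y p ω) * d₀
          + (∑ p, c p * Y p ω) * (∑ p, e p * Z p ω))) ∂P := by
    congr 1; funext ω; ring
  rw [expand2, integral_add (integrable_const _) I123, integral_add I1 I23,
    integral_add I2 hFG, integral_const, integral_const_mul, hintG,
    integral_mul_const, hintF, hintFG]
  simp

lemma euc_sum_apply {d m : ℕ} (j : Fin d) (g : Fin m → Euc d) :
    (∑ i, g i) j = ∑ i, g i j :=
  by rw [WithLp.ofLp_sum]; exact Finset.sum_apply j Finset.univ (fun i => (g i : Fin d → ℝ))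

lemma sum_delta_sq {n : ℕ} (s : Fin n → ℝ) (i : Fin n) (cc : ℝ) :
    ∑ k, ((if k = i then (1:ℝ) else 0) - cc) * ((if k = i then (1:ℝ) else 0) - cc) * s k
      = (1 - 2*cc) * s i + cc^2 * ∑ k, s k := by
  have h : ∀ k, ((if k = i then (1:ℝ) else 0) - cc) * ((if k = i then (1:ℝ) else 0) - cc) * s k
      = (1-2*cc) * (if k = i then s k else 0) + cc^2 * s k := fun k => by split_ifs <;> ring
  rw [Finset.sum_congr rfl fun k _ => h k, Finset.sum_add_distrib, ← Finset.mul_sum,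
    ← Finset.mul_sum, Finset.sum_ite_eq' Finset.univ i s]
  simp

end Aux

/-- unbiasedness of the gradient-covariance estimator, eq. (10)–(11):
for mutually independent families `(X_{i1},…,X_{iR})`, i.i.d. within each family with mean
`μ_i` and covariance `Σ_i`, the estimator `(1/n)Σ_i {(X̄_i−X̄)(X̄_i−X̄)ᵀ + Σ̂_i/n}` has
expectation `(1/n)Σ_i {(μ_i−μ̄)(μ_i−μ̄)ᵀ + Σ_i/R}`. -/
theorem covariance_estimator_unbiased
    (d n R : ℕ) (hn : 1 ≤ n) (hR : 2 ≤ R)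
    (Ω : Type) [MeasurableSpace Ω] (P : Measure Ω) [IsProbabilityMeasure P]
    (X : Fin n → Fin R → Ω → Euc d)
    (μv : Fin n → Euc d) (Smat : Fin n → Matrix (Fin d) (Fin d) ℝ)
    (hmeas : ∀ i r, Measurable (X i r))
    (hL2 : ∀ i r, MemLp (X i r) 2 P)
    (hindep_fam : iIndepFun
      (fun i ω => fun r : Fin R => X i r ω) P)
    (hiid_indep : ∀ i, iIndepFun (fun r => X i r) P)
    (hiid_ident : ∀ i r r', IdentDistrib (X i r) (X i r') P P)
    (hmean : ∀ i r, (∫ ω, X i r ω ∂P) = μv i)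
    (hcov : ∀ i r j l, (∫ ω, (X i r ω j - μv i j) * (X i r ω l - μv i l) ∂P) = Smat i j l) :
    let Xbari : Fin n → Ω → Euc d := fun i ω => (1 / (R : ℝ)) • ∑ r : Fin R, X i r ω
    let Xbar : Ω → Euc d := fun ω => (1 / (n : ℝ)) • ∑ i : Fin n, Xbari i ω
    let Shat : Fin n → Ω → Matrix (Fin d) (Fin d) ℝ := fun i ω =>
      Matrix.of fun j l => (1 / ((R : ℝ) * ((R : ℝ) - 1))) *
        ∑ r : Fin R, (X i r ω j - Xbari i ω j) * (X i r ω l - Xbari i ω l)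
    let μbar : Euc d := (1 / (n : ℝ)) • ∑ i : Fin n, μv i
    ∀ j l : Fin d,
      (∫ ω, (1 / (n : ℝ)) *
          ∑ i : Fin n,
            ((Xbari i ω j - Xbar ω j) * (Xbari i ω l - Xbar ω l) + Shat i ω j l / (n : ℝ))
          ∂P) =
        (1 / (n : ℝ)) *
          ∑ i : Fin n,
            ((μv i j - μbar j) * (μv i l - μbar l) + Smat i j l / (R : ℝ)) := by
  classical
  intro Xbari Xbar Shat μbar j l
  have hn0 : (n : ℝ) ≠ 0 := Nat.cast_ne_zero.mpr (by omega)
  have hR0 : (R : ℝ) ≠ 0 := Nat.cast_ne_zero.mpr (by omega)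
  have hR2 : (2:ℝ) ≤ (R:ℝ) := by exact_mod_cast hR
  have hR1 : (R : ℝ) - 1 ≠ 0 := by linarith
  -- notation
  set s : Fin n × Fin R → ℝ := fun p => Smat p.1 j l with hs
  set Yf : Fin n × Fin R → Ω → ℝ := fun p ω => X p.1 p.2 ω j - μv p.1 j with hYf
  set Zf : Fin n × Fin R → Ω → ℝ := fun p ω => X p.1 p.2 ω l - μv p.1 l with hZf
  set av : Fin n → ℝ := fun i => μv i j - μbar j with hav
  set bv : Fin n → ℝ := fun i => μv i l - μbar l with hbv
  set cm : Fin n → Fin n × Fin R → ℝ :=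
    fun i p => (1/(R:ℝ)) * ((if p.1 = i then (1:ℝ) else 0) - 1/(n:ℝ)) with hcm
  set cw : Fin n → Fin R → Fin n × Fin R → ℝ :=
    fun i r p => (if p.1 = i then (1:ℝ) else 0) * ((if p.2 = r then (1:ℝ) else 0) - 1/(R:ℝ))
    with hcw
  -- L² membership of components and centered variables
  have hXj2 : ∀ (i : Fin n) (r : Fin R) (m : Fin d), MemLp (fun ω => X i r ω m) 2 P := by
    intro i r m
    have h := (EuclideanSpace.proj (𝕜 := ℝ) m).comp_memLp' (hL2 i r)
    exact h
  have hY2 : ∀ p, MemLp (Yf p) 2 P := fun p => (hXj2 p.1 p.2 j).sub (memLp_const _)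
  have hZ2 : ∀ p, MemLp (Zf p) 2 P := fun p => (hXj2 p.1 p.2 l).sub (memLp_const _)
  -- means
  have hXint : ∀ i r, Integrable (X i r) P := fun i r => (hL2 i r).integrable one_le_two
  have hXjmean : ∀ (i : Fin n) (r : Fin R) (m : Fin d), ∫ ω, X i r ω m ∂P = μv i m := by
    intro i r m
    have h := (EuclideanSpace.proj (𝕜 := ℝ) m).integral_comp_comm (hXint i r)
    simpa [hmean i r] using h
  have hY0 : ∀ p, ∫ ω, Yf p ω ∂P = 0 := by
    intro p
    rw [hYf]
    rw [integral_sub ((hXj2 p.1 p.2 j).integrable one_le_two) (integrable_const _),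
      hXjmean, integral_const]
    simp
  have hZ0 : ∀ p, ∫ ω, Zf p ω ∂P = 0 := by
    intro p
    rw [hZf]
    rw [integral_sub ((hXj2 p.1 p.2 l).integrable one_le_two) (integrable_const _),
      hXjmean, integral_const]
    simp
  -- independence
  have hXindep : ∀ p q : Fin n × Fin R, p ≠ q → IndepFun (X p.1 p.2) (X q.1 q.2) P := by
    intro p q hpq
    obtain ⟨i, ri⟩ := p; obtain ⟨k, rk⟩ := q
    rcases eq_or_ne i k with h1 | h1
    · subst h1
      have h2 : ri ≠ rk := by
        intro h; exact hpq (by rw [h])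
      exact (hiid_indep i).indepFun h2
    · have hfam := hindep_fam.indepFun h1
      exact hfam.comp (measurable_pi_apply ri) (measurable_pi_apply rk)
  have hYZindep : ∀ p q : Fin n × Fin R, p ≠ q → IndepFun (Yf p) (Zf q) P := by
    intro p q hpq
    have m1 : Measurable (fun v : Euc d => v j - μv p.1 j) :=
      ((measurable_pi_apply j).comp (WithLp.measurable_ofLp _ _)).sub measurable_const
    have m2 : Measurable (fun v : Euc d => v l - μv q.1 l) :=
      ((measurable_pi_apply l).comp (WithLp.measurable_ofLp _ _)).sub measurable_const
    exact (hXindep p q hpq).comp m1 m2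
  have hYZ : ∀ p q, ∫ ω, Yf p ω * Zf q ω ∂P = if p = q then s p else 0 := by
    intro p q
    by_cases hpq : p = q
    · subst hpq
      rw [if_pos rfl, hYf, hZf, hs]
      exact hcov p.1 p.2 j l
    · rw [if_neg hpq]
      have h := (hYZindep p q hpq).integral_mul_eq_mul_integral
        (hY2 p).aestronglyMeasurable (hZ2 q).aestronglyMeasurable
      have h2 : ∫ ω, Yf p ω * Zf q ω ∂P = (∫ ω, Yf p ω ∂P) * ∫ ω, Zf q ω ∂P := h
      rw [h2, hY0 p, hZ0 q, zero_mul]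
  -- component formulas
  have hXbari : ∀ i ω (m : Fin d), Xbari i ω m = (1/(R:ℝ)) * ∑ r, X i r ω m := by
    intro i ω m
    show ((1/(R:ℝ)) • ∑ r, X i r ω) m = _
    rw [PiLp.smul_apply, smul_eq_mul, euc_sum_apply]
  have hXbar : ∀ ω (m : Fin d), Xbar ω m = (1/(n:ℝ)) * ∑ i, Xbari i ω m := by
    intro ω m
    show ((1/(n:ℝ)) • ∑ i, Xbari i ω) m = _
    rw [PiLp.smul_apply, smul_eq_mul, euc_sum_apply]
  have hμbar : ∀ (m : Fin d), μbar m = (1/(n:ℝ)) * ∑ i, μv i m := by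
    intro m
    show ((1/(n:ℝ)) • ∑ i, μv i) m = _
    rw [PiLp.smul_apply, smul_eq_mul, euc_sum_apply]
  have hShat : ∀ i ω, Shat i ω j l = (1/((R:ℝ)*((R:ℝ)-1))) *
      ∑ r, (X i r ω j - Xbari i ω j) * (X i r ω l - Xbari i ω l) := fun i ω => rfl
  -- decomposition of between-group deviations
  have hdecomp : ∀ (m : Fin d) (i : Fin n) (ω : Ω), Xbari i ω m - Xbar ω m
      = (μv i m - μbar m) + ∑ p : Fin n × Fin R, cm i p * (X p.1 p.2 ω m - μv p.1 m) := by
    intro m i ω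
    rw [hXbar, hμbar]
    simp only [hXbari, hcm]
    rw [Fintype.sum_prod_type]
    have inner : ∀ k : Fin n,
        ∑ r : Fin R, (1/(R:ℝ)) * ((if k = i then (1:ℝ) else 0) - 1/(n:ℝ)) * (X k r ω m - μv k m)
        = ((if k = i then (1:ℝ) else 0) - 1/(n:ℝ)) * ((1/(R:ℝ)) * ∑ r, X k r ω m - μv k m) := by
      intro k
      rw [← Finset.mul_sum, Finset.sum_sub_distrib, Finset.sum_const, Finset.card_univ,
        Fintype.card_fin, nsmul_eq_mul]
      have hc : (1/(R:ℝ)) * (R:ℝ) = 1 := by field_simp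
      linear_combination (-(((if k = i then (1:ℝ) else 0) - 1/(n:ℝ)) * μv k m)) * hc
    rw [Finset.sum_congr rfl fun k _ => inner k]
    have split : ∑ k : Fin n,
        ((if k = i then (1:ℝ) else 0) - 1/(n:ℝ)) * ((1/(R:ℝ)) * ∑ r, X k r ω m - μv k m)
        = ((1/(R:ℝ)) * ∑ r, X i r ω m - μv i m)
          - (1/(n:ℝ)) * ∑ k : Fin n, ((1/(R:ℝ)) * ∑ r, X k r ω m - μv k m) := by
      have e1 : ∀ k : Fin n,
          ((if k = i then (1:ℝ) else 0) - 1/(n:ℝ)) * ((1/(R:ℝ)) * ∑ r, X k r ω m - μv k m)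
          = (if k = i then ((1/(R:ℝ)) * ∑ r, X k r ω m - μv k m) else 0)
            + (-(1/(n:ℝ))) * ((1/(R:ℝ)) * ∑ r, X k r ω m - μv k m) := fun k => by
        split_ifs <;> ring
      rw [Finset.sum_congr rfl fun k _ => e1 k, Finset.sum_add_distrib,
        Finset.sum_ite_eq' Finset.univ i, ← Finset.mul_sum]
      simp only [Finset.mem_univ, if_true]
      ring
    rw [split, Finset.sum_sub_distrib]
    ring
  -- decomposition of within-group deviations
  have hdecomp2 : ∀ (m : Fin d) (i : Fin n) (r : Fin R) (ω : Ω), X i r ω m - Xbari i ω m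
      = 0 + ∑ p : Fin n × Fin R, cw i r p * (X p.1 p.2 ω m - μv p.1 m) := by
    intro m i r ω
    rw [hXbari, zero_add]
    simp only [hcw]
    rw [Fintype.sum_prod_type]
    have hk : ∀ k : Fin n, ∑ r' : Fin R,
        (if k = i then (1:ℝ) else 0) * ((if r' = r then (1:ℝ) else 0) - 1/(R:ℝ))
          * (X k r' ω m - μv k m)
        = if k = i then
            ∑ r' : Fin R, ((if r' = r then (1:ℝ) else 0) - 1/(R:ℝ)) * (X k r' ω m - μv k m)
          else 0 := by
      intro k; split_ifs with h <;> simp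
    rw [Finset.sum_congr rfl fun k _ => hk k, Finset.sum_ite_eq' Finset.univ i _]
    simp only [Finset.mem_univ, if_true]
    have inner : ∑ r' : Fin R,
        ((if r' = r then (1:ℝ) else 0) - 1/(R:ℝ)) * (X i r' ω m - μv i m)
        = (X i r ω m - μv i m) - (1/(R:ℝ)) * ∑ r' : Fin R, (X i r' ω m - μv i m) := by
      have e2 : ∀ r' : Fin R,
          ((if r' = r then (1:ℝ) else 0) - 1/(R:ℝ)) * (X i r' ω m - μv i m)
          = (if r' = r then (X i r' ω m - μv i m) else 0)
            + (-(1/(R:ℝ))) * (X i r' ω m - μv i m) := fun r' => by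
        split_ifs <;> ring
      rw [Finset.sum_congr rfl fun r' _ => e2 r', Finset.sum_add_distrib,
        Finset.sum_ite_eq' Finset.univ r, ← Finset.mul_sum]
      simp only [Finset.mem_univ, if_true]
      ring
    rw [inner, Finset.sum_sub_distrib, Finset.sum_const, Finset.card_univ,
      Fintype.card_fin, nsmul_eq_mul]
    have hc : (1/(R:ℝ)) * (R:ℝ) = 1 := by field_simp
    linear_combination (-(μv i m)) * hc
  -- pointwise rewriting of the integrand
  have hpoint : ∀ ω : Ω, (1/(n:ℝ)) * ∑ i : Fin n,
        ((Xbari i ω j - Xbar ω j) * (Xbari i ω l - Xbar ω l) + Shat i ω j l / (n:ℝ))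
      = (1/(n:ℝ)) * ∑ i : Fin n,
        ((av i + ∑ p, cm i p * Yf p ω) * (bv i + ∑ p, cm i p * Zf p ω)
          + (1/((R:ℝ)*((R:ℝ)-1)))
              * (∑ r : Fin R, (0 + ∑ p, cw i r p * Yf p ω) * (0 + ∑ p, cw i r p * Zf p ω))
            / (n:ℝ)) := by
    intro ω
    congr 1
    refine Finset.sum_congr rfl fun i _ => ?_
    simp only [hYf, hZf, hav, hbv]
    rw [hdecomp j i ω, hdecomp l i ω, hShat i ω]
    simp only [hdecomp2]
  have hfe : (fun ω => (1/(n:ℝ)) * ∑ i : Fin n,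
        ((Xbari i ω j - Xbar ω j) * (Xbari i ω l - Xbar ω l) + Shat i ω j l / (n:ℝ)))
      = (fun ω => (1/(n:ℝ)) * ∑ i : Fin n,
        ((av i + ∑ p, cm i p * Yf p ω) * (bv i + ∑ p, cm i p * Zf p ω)
          + (1/((R:ℝ)*((R:ℝ)-1)))
              * (∑ r : Fin R, (0 + ∑ p, cw i r p * Yf p ω) * (0 + ∑ p, cw i r p * Zf p ω))
            / (n:ℝ))) := funext hpoint
  rw [hfe]
  -- integrate
  have kU := fun i : Fin n => key_integral Yf Zf s hY2 hZ2 hY0 hZ0 hYZ (av i) (bv i) (cm i) (cm i)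
  have kW := fun (i : Fin n) (r : Fin R) =>
    key_integral Yf Zf s hY2 hZ2 hY0 hZ0 hYZ 0 0 (cw i r) (cw i r)
  have intW : ∀ i : Fin n, Integrable (fun ω => (1/((R:ℝ)*((R:ℝ)-1)))
      * (∑ r : Fin R, (0 + ∑ p, cw i r p * Yf p ω) * (0 + ∑ p, cw i r p * Zf p ω)) / (n:ℝ)) P :=
    fun i => ((integrable_finset_sum _ fun r _ => (kW i r).1).const_mul _).div_const _
  have intSummand : ∀ i : Fin n, Integrable (fun ω =>
      (av i + ∑ p, cm i p * Yf p ω) * (bv i + ∑ p, cm i p * Zf p ω)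
      + (1/((R:ℝ)*((R:ℝ)-1)))
          * (∑ r : Fin R, (0 + ∑ p, cw i r p * Yf p ω) * (0 + ∑ p, cw i r p * Zf p ω))
        / (n:ℝ)) P := fun i => (kU i).1.add (intW i)
  rw [integral_const_mul, integral_finset_sum _ (fun i _ => intSummand i)]
  have hterm : ∀ i : Fin n,
      (∫ ω, ((av i + ∑ p, cm i p * Yf p ω) * (bv i + ∑ p, cm i p * Zf p ω)
        + (1/((R:ℝ)*((R:ℝ)-1)))
            * (∑ r : Fin R, (0 + ∑ p, cw i r p * Yf p ω) * (0 + ∑ p, cw i r p * Zf p ω))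
          / (n:ℝ)) ∂P)
      = (av i * bv i + ∑ p, cm i p * cm i p * s p)
        + (1/((R:ℝ)*((R:ℝ)-1)))
            * (∑ r : Fin R, (0 * 0 + ∑ p, cw i r p * cw i r p * s p)) / (n:ℝ) := by
    intro i
    rw [integral_add (kU i).1 (intW i), (kU i).2, integral_div, integral_const_mul,
      integral_finset_sum _ (fun r _ => (kW i r).1)]
    rw [Finset.sum_congr rfl fun r _ => (kW i r).2]
  rw [Finset.sum_congr rfl fun i _ => hterm i]
  -- final algebra
  have hcmsum : ∀ i : Fin n, ∑ p : Fin n × Fin R, cm i p * cm i p * s p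
      = (1/(R:ℝ)) * ((1 - 2/(n:ℝ)) * Smat i j l + (1/(n:ℝ))^2 * ∑ k : Fin n, Smat k j l) := by
    intro i
    simp only [hcm, hs]
    rw [Fintype.sum_prod_type]
    have hone : ∀ k : Fin n, ∑ _r : Fin R,
        (1/(R:ℝ)) * ((if k = i then (1:ℝ) else 0) - 1/(n:ℝ))
          * ((1/(R:ℝ)) * ((if k = i then (1:ℝ) else 0) - 1/(n:ℝ))) * Smat k j l
        = (1/(R:ℝ)) * (((if k = i then (1:ℝ) else 0) - 1/(n:ℝ))
            * ((if k = i then (1:ℝ) else 0) - 1/(n:ℝ)) * Smat k j l) := by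
      intro k
      rw [Finset.sum_const, Finset.card_univ, Fintype.card_fin, nsmul_eq_mul]
      split_ifs with h <;> (field_simp <;> ring)
    rw [Finset.sum_congr rfl fun k _ => hone k, ← Finset.mul_sum,
      sum_delta_sq (fun k => Smat k j l) i (1/(n:ℝ))]
    ring
  have hcwsum : ∀ (i : Fin n) (r : Fin R), ∑ p : Fin n × Fin R, cw i r p * cw i r p * s p
      = (1 - 1/(R:ℝ)) * Smat i j l := by
    intro i r
    simp only [hcw, hs]
    rw [Fintype.sum_prod_type]
    have hk : ∀ k : Fin n, ∑ r' : Fin R,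
        (if k = i then (1:ℝ) else 0) * ((if r' = r then (1:ℝ) else 0) - 1/(R:ℝ))
          * ((if k = i then (1:ℝ) else 0) * ((if r' = r then (1:ℝ) else 0) - 1/(R:ℝ)))
          * Smat k j l
        = if k = i then ∑ r' : Fin R,
            ((if r' = r then (1:ℝ) else 0) - 1/(R:ℝ))
              * ((if r' = r then (1:ℝ) else 0) - 1/(R:ℝ)) * Smat k j l
          else 0 := by
      intro k; split_ifs with h <;> simp [mul_assoc]
    rw [Finset.sum_congr rfl fun k _ => hk k, Finset.sum_ite_eq' Finset.univ i _]
    simp only [Finset.mem_univ, if_true]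
    rw [sum_delta_sq (fun _ => Smat i j l) r (1/(R:ℝ))]
    simp only [Finset.sum_const, Finset.card_univ, Fintype.card_fin, nsmul_eq_mul]
    field_simp <;> ring
  congr 1
  have hws : ∀ i : Fin n, ∑ r : Fin R, ((0:ℝ) * 0 + ∑ p, cw i r p * cw i r p * s p)
      = (R:ℝ) * ((1 - 1/(R:ℝ)) * Smat i j l) := by
    intro i
    have hr : ∀ r : Fin R, (0:ℝ) * 0 + ∑ p, cw i r p * cw i r p * s p
        = (1 - 1/(R:ℝ)) * Smat i j l := by
      intro r; rw [hcwsum i r, zero_mul, zero_add]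
    rw [Finset.sum_congr rfl fun r _ => hr r, Finset.sum_const, Finset.card_univ,
      Fintype.card_fin, nsmul_eq_mul]
  have step1 : ∀ i : Fin n,
      (av i * bv i + ∑ p, cm i p * cm i p * s p)
        + (1/((R:ℝ)*((R:ℝ)-1)))
            * (∑ r : Fin R, ((0:ℝ) * 0 + ∑ p, cw i r p * cw i r p * s p)) / (n:ℝ)
      = av i * bv i + ((1/(R:ℝ)) * Smat i j l - (1/((R:ℝ)*(n:ℝ))) * Smat i j l
          + (1/((R:ℝ)*(n:ℝ)^2)) * ∑ k : Fin n, Smat k j l) := by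
    intro i
    rw [hcmsum i, hws i]
    field_simp
    ring
  rw [Finset.sum_congr rfl fun i _ => step1 i, Finset.sum_add_distrib]
  conv_rhs => rw [Finset.sum_add_distrib]
  refine congrArg₂ (· + ·) ?_ ?_
  · exact Finset.sum_congr rfl fun i _ => by simp only [hav, hbv]
  have e3 : ∀ i : Fin n,
      (1/(R:ℝ)) * Smat i j l - (1/((R:ℝ)*(n:ℝ))) * Smat i j l
        + (1/((R:ℝ)*(n:ℝ)^2)) * ∑ k : Fin n, Smat k j l
      = ((1/(R:ℝ)) - 1/((R:ℝ)*(n:ℝ))) * Smat i j l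
        + (1/((R:ℝ)*(n:ℝ)^2)) * ∑ k : Fin n, Smat k j l := fun i => by ring
  rw [Finset.sum_congr rfl fun i _ => e3 i, Finset.sum_add_distrib, ← Finset.mul_sum,
    Finset.sum_const, Finset.card_univ, Fintype.card_fin, nsmul_eq_mul, ← Finset.sum_div]
  field_simp
  ring
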